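/- arXiv:2508.11219 — 6 statements merged into one kernel-verified Lean document; each statement's English description precedes it below -/
import Mathlib

section
/- Fix δ > 0, ν₁ ∈ (0,1), ν₂ ∈ (1,∞). There exist constants 0 < η̲ ≤ η̄ < ∞, depending only on δ, ν₁, ν₂, with the following property. Let s, m̄ ∈ ℂ^N be nonzero vectors satisfying ν₁ ≤ Re⟨s, m̄⟩ / ⟨s,s⟩ and ⟨m̄, m̄⟩ / Re⟨s, m̄⟩ ≤ ν₂ (in particular Re⟨s,m̄⟩ > 0). Define τ = ⟨s,s⟩/Re⟨s,m̄⟩ − √( (⟨s,s⟩/Re⟨s,m̄⟩)² − ⟨s,s⟩/⟨m̄,m̄⟩ ) (the quantity under the square root is nonnegative by the Cauchy–Schwarz inequality, and τ > 0); define ρ = Re⟨s − τ m̄, m̄⟩; set u = 0 if ρ ≤ δ‖s − τ m̄‖‖m̄‖ and u = s − τ m̄ otherwise; set ρ_B = τ²ρ + τ u^H u and B = τ⁻¹ I_N − u u^H / ρ_B (interpreted as B = τ⁻¹ I_N when u = 0). Then B is Hermitian and η̲ I_N ⪯ B ⪯ η̄ I_N in the Loewner order. -/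
open Matrix
open scoped ComplexOrder

private lemma quadform_aux {N : ℕ} (v x : Fin N → ℂ) (c d : ℝ) :
    star x ⬝ᵥ ((((c:ℂ) • (1:Matrix (Fin N) (Fin N) ℂ)
        - (d:ℂ) • vecMulVec v (star v)) *ᵥ x))
      = ((c * ‖(WithLp.equiv 2 _).symm x‖^2
          - d * ‖star v ⬝ᵥ x‖^2 : ℝ) : ℂ) := by
  have h1 : star x ⬝ᵥ x = ((‖(WithLp.equiv 2 (Fin N → ℂ)).symm x‖^2 : ℝ) : ℂ) := by
    rw [show star x ⬝ᵥ x = inner (𝕜 := ℂ) ((WithLp.equiv 2 (Fin N → ℂ)).symm x) ((WithLp.equiv 2 (Fin N → ℂ)).symm x) from dotProduct_comm _ _, inner_self_eq_norm_sq_to_K]; norm_cast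
  have h2 : star x ⬝ᵥ (vecMulVec v (star v) *ᵥ x)
      = ((‖star v ⬝ᵥ x‖^2 : ℝ) : ℂ) := by
    have hm : vecMulVec v (star v) *ᵥ x = (star v ⬝ᵥ x) • v := by
      ext i
      simp only [mulVec, vecMulVec_apply, dotProduct, Pi.smul_apply, smul_eq_mul,
        Pi.star_apply]
      rw [Finset.sum_mul]
      exact Finset.sum_congr rfl fun j _ => by ring
    rw [hm, dotProduct_smul, smul_eq_mul, star_dotProduct]
    rw [norm_star]
    set z := star x ⬝ᵥ v
    rw [mul_comm, Complex.star_def, Complex.mul_conj]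
    rw [Complex.normSq_eq_norm_sq]
  rw [sub_mulVec, dotProduct_sub, smul_mulVec, smul_mulVec, one_mulVec,
    dotProduct_smul, dotProduct_smul, smul_eq_mul, smul_eq_mul, h1, h2]
  push_cast
  ring

private lemma herm_aux {N : ℕ} (v : Fin N → ℂ) (c d : ℝ) :
    (((c:ℂ) • (1:Matrix (Fin N) (Fin N) ℂ)
        - (d:ℂ) • vecMulVec v (star v))).IsHermitian := by
  have h1 : ((c:ℂ) • (1:Matrix (Fin N) (Fin N) ℂ)).IsHermitian := by
    unfold Matrix.IsHermitian
    rw [conjTranspose_smul, conjTranspose_one, Complex.star_def, Complex.conj_ofReal]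
  have h2 : ((d:ℂ) • vecMulVec v (star v)).IsHermitian := by
    unfold Matrix.IsHermitian
    rw [conjTranspose_smul, Complex.star_def, Complex.conj_ofReal]
    congr 1
    ext i j
    simp only [conjTranspose_apply, vecMulVec_apply, Pi.star_apply, star_mul', star_star]
    ring
  exact h1.sub h2

private lemma psd_aux {N : ℕ} (v : Fin N → ℂ) (c d : ℝ)
    (h : ∀ x : Fin N → ℂ,
      0 ≤ c * ‖(WithLp.equiv 2 (Fin N → ℂ)).symm x‖^2 - d * ‖star v ⬝ᵥ x‖^2) :
    (((c:ℂ) • (1:Matrix (Fin N) (Fin N) ℂ)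
        - (d:ℂ) • vecMulVec v (star v))).PosSemidef := by
  refine .of_dotProduct_mulVec_nonneg (herm_aux v c d) fun x => ?_
  rw [quadform_aux]
  exact Complex.zero_le_real.mpr (h x)

set_option maxHeartbeats 2000000 in
/-- **Bounded Hessian property of the modified memory-efficient self-scaling
Hermitian rank-1 update.**  The paper's inner product is `⟨u,v⟩ = vᴴ u`, so
`⟨s,mb⟩ = Mathlib's ⟪mb, s⟫_ℂ`.  There are constants `0 < η̲ ≤ η̄ < ∞`,
depending only on `δ, ν₁, ν₂`, such that the matrix `B` produced by the
update is Hermitian and satisfies `η̲ I ⪯ B ⪯ η̄ I` in the Loewner order. -/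
theorem bounded_hessian_of_SR1_update (δ ν₁ ν₂ : ℝ)
    (hδ : 0 < δ) (hν₁ : ν₁ ∈ Set.Ioo (0 : ℝ) 1) (hν₂ : ν₂ ∈ Set.Ioi (1 : ℝ)) :
    ∃ ηlo ηhi : ℝ, 0 < ηlo ∧ ηlo ≤ ηhi ∧
      ∀ (N : ℕ) (s mb : EuclideanSpace ℂ (Fin N)), s ≠ 0 → mb ≠ 0 →
        ν₁ ≤ (inner (𝕜 := ℂ) mb s).re / (inner (𝕜 := ℂ) s s).re →
        (inner (𝕜 := ℂ) mb mb).re / (inner (𝕜 := ℂ) mb s).re ≤ ν₂ →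
        ∀ τ : ℝ, τ = (inner (𝕜 := ℂ) s s).re / (inner (𝕜 := ℂ) mb s).re
            - Real.sqrt (((inner (𝕜 := ℂ) s s).re / (inner (𝕜 := ℂ) mb s).re) ^ 2
              - (inner (𝕜 := ℂ) s s).re / (inner (𝕜 := ℂ) mb mb).re) →
        ∀ ρ : ℝ, ρ = (inner (𝕜 := ℂ) mb (s - (τ : ℂ) • mb)).re →
        ∀ u : EuclideanSpace ℂ (Fin N),
          u = (if ρ ≤ δ * ‖s - (τ : ℂ) • mb‖ * ‖mb‖ then 0 else s - (τ : ℂ) • mb) →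
        ∀ ρB : ℝ, ρB = τ ^ 2 * ρ + τ * (inner (𝕜 := ℂ) u u).re →
        ∀ B : Matrix (Fin N) (Fin N) ℂ,
          B = (τ⁻¹ : ℂ) • (1 : Matrix (Fin N) (Fin N) ℂ)
              - ((ρB : ℂ))⁻¹ • vecMulVec (fun i => u i) (star fun i => u i) →
        B.IsHermitian ∧ (B - (ηlo : ℂ) • 1).PosSemidef
          ∧ ((ηhi : ℂ) • 1 - B).PosSemidef := by
  obtain ⟨hν₁0, hν₁1⟩ := hν₁
  have hν₂1 : 1 < ν₂ := hν₂
  have hδ2 : (0:ℝ) < δ + 2 := by linarith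
  refine ⟨δ * ν₁ / (δ + 2), 2 * ν₂, by positivity, ?_, ?_⟩
  · have h1 : δ * ν₁ / (δ + 2) ≤ ν₁ := by
      rw [div_le_iff₀ hδ2]; linarith
    linarith
  intro N s mb hs hmb hbnd1 hbnd2 τ hτ ρ hρ u hu ρB hρB B hB
  set a := (inner (𝕜 := ℂ) s s).re with ha_def
  set b := (inner (𝕜 := ℂ) mb s).re with hb_def
  set c := (inner (𝕜 := ℂ) mb mb).re with hc_def
  have hanorm : a = ‖s‖^2 := by
    rw [ha_def, @inner_self_eq_norm_sq_to_K ℂ]; norm_cast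
  have hcnorm : c = ‖mb‖^2 := by
    rw [hc_def, @inner_self_eq_norm_sq_to_K ℂ]; norm_cast
  clear_value a b c
  have ha0 : 0 < a := by
    rw [hanorm]; exact pow_pos (norm_pos_iff.mpr hs) 2
  have hc0 : 0 < c := by
    rw [hcnorm]; exact pow_pos (norm_pos_iff.mpr hmb) 2
  have hb1 : ν₁ * a ≤ b := (le_div_iff₀ ha0).mp hbnd1
  have hb0 : 0 < b := by linarith [mul_pos hν₁0 ha0]
  have hcb : c ≤ ν₂ * b := by
    have := (div_le_iff₀ hb0).mp hbnd2; linarith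
  have hCS : b ^ 2 ≤ a * c := by
    have h1 : b ≤ ‖mb‖ * ‖s‖ := by
      have := re_inner_le_norm (𝕜 := ℂ) mb s
      simp only [RCLike.re_to_complex] at this
      rw [← hb_def] at this
      exact this
    rw [hanorm, hcnorm]
    have h2 := mul_le_mul h1 h1 hb0.le (by positivity : (0:ℝ) ≤ ‖mb‖ * ‖s‖)
    linarith [h2]
  -- properties of τ
  set D := (a / b) ^ 2 - a / c with hD_def
  have hD0 : 0 ≤ D := by
    rw [hD_def, sub_nonneg, div_pow, div_le_div_iff₀ hc0 (by positivity)]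
    have := mul_le_mul_of_nonneg_left hCS ha0.le
    linarith [this]
  set sd := Real.sqrt D with hsd_def
  have hsd0 : 0 ≤ sd := Real.sqrt_nonneg D
  have hsd2 : sd ^ 2 = D := Real.sq_sqrt hD0
  clear_value D sd
  have hsdle : sd ≤ a / b := by
    rw [hsd_def]
    have : Real.sqrt D ≤ Real.sqrt ((a / b) ^ 2) := by
      apply Real.sqrt_le_sqrt
      rw [hD_def]
      have := le_of_lt (div_pos ha0 hc0)
      linarith
    rwa [Real.sqrt_sq (by positivity)] at this
  have hτ' : τ = a / b - sd := hτ
  have hτpos : 0 < τ := by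
    have hlt : D < (a / b) ^ 2 := by
      rw [hD_def]
      have := div_pos ha0 hc0
      linarith
    rw [hτ', sub_pos, hsd_def]
    calc Real.sqrt D < Real.sqrt ((a / b) ^ 2) := Real.sqrt_lt_sqrt hD0 hlt
      _ = a / b := Real.sqrt_sq (le_of_lt (div_pos ha0 hb0))
  have hτν₁ : τ * ν₁ ≤ 1 := by
    have h1 : τ ≤ a / b := by rw [hτ']; linarith
    have h2 : (a / b) * ν₁ ≤ 1 := by
      rw [div_mul_eq_mul_div, div_le_one hb0]; linarith [hb1]
    have h3 := mul_le_mul_of_nonneg_right h1 hν₁0.le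
    linarith
  have hc2 : (0:ℝ) < 2 * c := by linarith
  have hτν₂ : 1 ≤ 2 * ν₂ * τ := by
    obtain ⟨X, hX_def⟩ : ∃ X : ℝ, X = a / b - b / (2 * c) := ⟨_, rfl⟩
    have hX0 : 0 ≤ X := by
      rw [hX_def, sub_nonneg, div_le_div_iff₀ hc2 hb0]
      linarith [hCS, mul_pos ha0 hc0]
    have expand : X ^ 2 = (a / b) ^ 2 - a / c + (b / (2 * c)) ^ 2 := by
      rw [hX_def]
      field_simp
      ring
    have hDX : D ≤ X ^ 2 := by
      rw [hD_def, expand]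
      linarith [sq_nonneg (b / (2 * c))]
    have hsdX : sd ≤ X := by
      rw [hsd_def]
      calc Real.sqrt D ≤ Real.sqrt (X ^ 2) := Real.sqrt_le_sqrt hDX
        _ = X := Real.sqrt_sq hX0
    have hτgeb : b / (2 * c) ≤ τ := by
      rw [hX_def] at hsdX
      rw [hτ']
      linarith
    have hb2cτ : b ≤ τ * (2 * c) := (div_le_iff₀ hc2).mp hτgeb
    have h1 : τ * c ≤ τ * (ν₂ * b) := mul_le_mul_of_nonneg_left hcb (le_of_lt hτpos)
    have h2 : b ≤ 2 * ν₂ * τ * b := by linarith [h1, hb2cτ]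
    exact (le_mul_iff_one_le_left hb0).mp h2
  -- general consequences for τ⁻¹
  have hτne : τ ≠ 0 := ne_of_gt hτpos
  have hinv1 : ν₁ ≤ τ⁻¹ := by
    rw [inv_eq_one_div, le_div_iff₀ hτpos]; linarith
  have hinv2 : τ⁻¹ ≤ 2 * ν₂ := by
    rw [inv_eq_one_div, div_le_iff₀ hτpos]; linarith
  have helo : δ * ν₁ / (δ + 2) ≤ ν₁ := by
    rw [div_le_iff₀ hδ2]; linarith
  -- notation for the vector and its squared norm
  set v : Fin N → ℂ := fun i => u i with hv_def
  have hUnorm : (inner (𝕜 := ℂ) u u).re = ‖u‖ ^ 2 := by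
    rw [@inner_self_eq_norm_sq_to_K ℂ]; norm_cast
  rw [hUnorm] at hρB
  set U := ‖u‖ ^ 2 with hU_def
  have hU0 : 0 ≤ U := by rw [hU_def]; positivity
  have hCSx : ∀ x : Fin N → ℂ, ‖star v ⬝ᵥ x‖ ^ 2
      ≤ U * ‖(WithLp.equiv 2 (Fin N → ℂ)).symm x‖ ^ 2 := by
    intro x
    have h1 : star v ⬝ᵥ x
        = inner (𝕜 := ℂ) u ((WithLp.equiv 2 (Fin N → ℂ)).symm x) := dotProduct_comm _ _
    rw [h1, hU_def]
    have h2 := norm_inner_le_norm (𝕜 := ℂ) u ((WithLp.equiv 2 (Fin N → ℂ)).symm x)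
    have h3 := mul_le_mul h2 h2 (norm_nonneg _)
      (by positivity : (0:ℝ) ≤ ‖u‖ * ‖(WithLp.equiv 2 (Fin N → ℂ)).symm x‖)
    linarith [h3]
  clear_value v U
  -- rewrite the matrices in the standard shape
  have hBeq : B = (((τ⁻¹ : ℝ)) : ℂ) • (1 : Matrix (Fin N) (Fin N) ℂ)
      - (((ρB⁻¹ : ℝ)) : ℂ) • vecMulVec v (star v) := by
    rw [hB, Complex.ofReal_inv, Complex.ofReal_inv]
  have e1 : B - ((δ * ν₁ / (δ + 2) : ℝ) : ℂ) • 1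
      = (((τ⁻¹ - δ * ν₁ / (δ + 2) : ℝ)) : ℂ) • (1 : Matrix (Fin N) (Fin N) ℂ)
        - (((ρB⁻¹ : ℝ)) : ℂ) • vecMulVec v (star v) := by
    rw [hBeq, Complex.ofReal_sub, sub_smul, sub_right_comm]
  have e2 : ((2 * ν₂ : ℝ) : ℂ) • 1 - B
      = (((2 * ν₂ - τ⁻¹ : ℝ)) : ℂ) • (1 : Matrix (Fin N) (Fin N) ℂ)
        - (((-ρB⁻¹ : ℝ)) : ℂ) • vecMulVec v (star v) := by
    rw [hBeq, Complex.ofReal_sub, Complex.ofReal_neg, sub_smul, neg_smul, sub_neg_eq_add]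
    abel
  -- the key scalar inequalities
  have hineq : ∀ x : Fin N → ℂ,
      0 ≤ (τ⁻¹ - δ * ν₁ / (δ + 2)) * ‖(WithLp.equiv 2 (Fin N → ℂ)).symm x‖ ^ 2
          - ρB⁻¹ * ‖star v ⬝ᵥ x‖ ^ 2
      ∧ 0 ≤ (2 * ν₂ - τ⁻¹) * ‖(WithLp.equiv 2 (Fin N → ℂ)).symm x‖ ^ 2
          - (-ρB⁻¹) * ‖star v ⬝ᵥ x‖ ^ 2 := by
    by_cases hcond : ρ ≤ δ * ‖s - (τ : ℂ) • mb‖ * ‖mb‖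
    · -- u = 0
      rw [if_pos hcond] at hu
      have hv0 : v = 0 := by rw [hv_def, hu]; ext i; simp
      intro x
      have hX0 : (0:ℝ) ≤ ‖(WithLp.equiv 2 (Fin N → ℂ)).symm x‖ ^ 2 := by positivity
      rw [hv0]
      simp only [star_zero, zero_dotProduct, norm_zero]
      norm_num
      constructor
      · exact mul_nonneg (by linarith) hX0
      · exact mul_nonneg (by linarith) hX0
    · -- u = s - τ • mb
      rw [if_neg hcond] at hu
      push_neg at hcond
      rw [← hu] at hcond
      have hρ0 : 0 < ρ := by
        have h1 : (0:ℝ) ≤ δ * ‖u‖ * ‖mb‖ := by positivity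
        linarith
      -- ρ = b - τ c
      have him : (inner (𝕜 := ℂ) mb mb).im = 0 := by
        have := inner_self_im (𝕜 := ℂ) mb
        simp only [RCLike.im_to_complex] at this
        exact this
      have hρeq : ρ = b - τ * c := by
        rw [hρ, inner_sub_right, inner_smul_right, hb_def, hc_def]
        simp [Complex.sub_re, Complex.mul_re, Complex.ofReal_re, Complex.ofReal_im, him]
      -- U = a - 2 τ b + τ² c
      have hres : (inner (𝕜 := ℂ) s ((τ : ℂ) • mb)).re = τ * b := by
        rw [inner_smul_right, ← inner_conj_symm s mb, hb_def]
        simp [Complex.mul_re, Complex.ofReal_re, Complex.ofReal_im]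
        exact Or.inl (by rw [← inner_conj_symm]; exact Complex.conj_re _)
      have hUeq : U = a - 2 * (τ * b) + τ ^ 2 * c := by
        have h1 : ‖s - (τ : ℂ) • mb‖ ^ 2
            = ‖s‖ ^ 2 - 2 * (inner (𝕜 := ℂ) s ((τ : ℂ) • mb)).re + ‖(τ : ℂ) • mb‖ ^ 2 := by
          have := @norm_sub_sq ℂ _ _ _ _ s ((τ : ℂ) • mb)
          simp only [RCLike.re_to_complex] at this
          exact this
        have h2 : ‖(τ : ℂ) • mb‖ ^ 2 = τ ^ 2 * ‖mb‖ ^ 2 := by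
          rw [norm_smul, Complex.norm_real, Real.norm_eq_abs, mul_pow, sq_abs]
        rw [hU_def, hu, h1, hres, h2, hanorm, hcnorm]
      have hρB' : ρB = τ ^ 2 * ρ + τ * U := hρB
      have hρBpos : 0 < ρB := by
        rw [hρB']
        linarith [mul_pos (mul_pos hτpos hτpos) hρ0, mul_nonneg hτpos.le hU0]
      have hρBne : ρB ≠ 0 := ne_of_gt hρBpos
      -- ν₁ ‖s‖ ≤ ‖mb‖
      have hν₁s : ν₁ * ‖s‖ ≤ ‖mb‖ := by
        have e1 : (ν₁ * a) * (ν₁ * a) ≤ b * b := mul_le_mul hb1 hb1 (by positivity) hb0.le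
        have h1 : ν₁ ^ 2 * a ≤ c := by
          have h2 : a * (ν₁ ^ 2 * a) ≤ a * c := by linarith [e1, hCS]
          exact (mul_le_mul_iff_right₀ ha0).mp h2
        rw [hanorm, hcnorm] at h1
        have h2 : (ν₁ * ‖s‖) ^ 2 ≤ ‖mb‖ ^ 2 := by linarith [h1]
        calc ν₁ * ‖s‖ = Real.sqrt ((ν₁ * ‖s‖) ^ 2) := (Real.sqrt_sq (by positivity)).symm
          _ ≤ Real.sqrt (‖mb‖ ^ 2) := Real.sqrt_le_sqrt h2
          _ = ‖mb‖ := Real.sqrt_sq (norm_nonneg mb)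
      -- ‖u‖ ≤ ‖s‖ + τ ‖mb‖
      have hub : ‖u‖ ≤ ‖s‖ + τ * ‖mb‖ := by
        rw [hu]
        calc ‖s - (τ : ℂ) • mb‖ ≤ ‖s‖ + ‖(τ : ℂ) • mb‖ := norm_sub_le _ _
          _ = ‖s‖ + τ * ‖mb‖ := by
              rw [norm_smul, Complex.norm_real, Real.norm_eq_abs, abs_of_pos hτpos]
      have hνu : ν₁ * ‖u‖ ≤ 2 * ‖mb‖ := by
        have h1 := mul_le_mul_of_nonneg_left hub hν₁0.le
        have h2 := mul_le_mul_of_nonneg_right hτν₁ (norm_nonneg mb)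
        have h3 := mul_le_mul_of_nonneg_left hν₁s (le_of_lt hν₁0)
        linarith [h1, h2, hν₁s]
      have hU2ρ : δ * ν₁ * U ≤ 2 * ρ := by
        have h1 := mul_le_mul_of_nonneg_left hνu (mul_nonneg hδ.le (norm_nonneg u))
        rw [hU_def]
        linarith [h1, hcond]
      have hkey : δ * ν₁ / (δ + 2) * ρB ≤ τ * ρ := by
        rw [div_mul_eq_mul_div, div_le_iff₀ hδ2, hρB']
        have p1 : δ * ν₁ * (τ ^ 2 * ρ) ≤ δ * (τ * ρ) := by
          have q := mul_le_mul_of_nonneg_right hτν₁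
            (mul_nonneg (mul_nonneg hδ.le hτpos.le) hρ0.le)
          linarith [q]
        have p2 : τ * (δ * ν₁ * U) ≤ τ * (2 * ρ) :=
          mul_le_mul_of_nonneg_left hU2ρ hτpos.le
        linarith [p1, p2]
      have hτinv : τ⁻¹ * ρB = τ * ρ + U := by
        rw [hρB']; field_simp
      have h7 : δ * ν₁ / (δ + 2) * ρB + U ≤ τ⁻¹ * ρB := by
        rw [hτinv]; linarith
      have h6 : δ * ν₁ / (δ + 2) + ρB⁻¹ * U ≤ τ⁻¹ := by
        have hdiv : (δ * ν₁ / (δ + 2) * ρB + U) / ρB ≤ τ⁻¹ :=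
          (div_le_iff₀ hρBpos).mpr (by linarith)
        have hsplit : (δ * ν₁ / (δ + 2) * ρB + U) / ρB
            = δ * ν₁ / (δ + 2) + ρB⁻¹ * U := by
          field_simp
        linarith
      intro x
      have hX0 : (0:ℝ) ≤ ‖(WithLp.equiv 2 (Fin N → ℂ)).symm x‖ ^ 2 := by positivity
      have hT0 : (0:ℝ) ≤ ‖star v ⬝ᵥ x‖ ^ 2 := by positivity
      have hTX := hCSx x
      constructor
      · have h8 : ρB⁻¹ * ‖star v ⬝ᵥ x‖ ^ 2
            ≤ ρB⁻¹ * (U * ‖(WithLp.equiv 2 (Fin N → ℂ)).symm x‖ ^ 2) :=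
          mul_le_mul_of_nonneg_left hTX (inv_nonneg.mpr hρBpos.le)
        have h9 : ρB⁻¹ * U * ‖(WithLp.equiv 2 (Fin N → ℂ)).symm x‖ ^ 2
            ≤ (τ⁻¹ - δ * ν₁ / (δ + 2)) * ‖(WithLp.equiv 2 (Fin N → ℂ)).symm x‖ ^ 2 :=
          mul_le_mul_of_nonneg_right (by linarith) hX0
        rw [← mul_assoc] at h8
        linarith
      · have h8 : 0 ≤ ρB⁻¹ * ‖star v ⬝ᵥ x‖ ^ 2 := by positivity
        have h9 : 0 ≤ (2 * ν₂ - τ⁻¹) * ‖(WithLp.equiv 2 (Fin N → ℂ)).symm x‖ ^ 2 :=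
          mul_nonneg (by linarith) hX0
        linarith [h8, h9]
  refine ⟨by rw [hBeq]; exact herm_aux v τ⁻¹ ρB⁻¹, ?_, ?_⟩
  · rw [show ((δ * ν₁ / (δ + 2) : ℝ) : ℂ) • (1 : Matrix (Fin N) (Fin N) ℂ)
        = ((δ * ν₁ / (δ + 2) : ℝ) : ℂ) • 1 from rfl] at e1
    rw [e1]
    exact psd_aux _ _ _ fun x => (hineq x).1
  · rw [e2]
    exact psd_aux _ _ _ fun x => (hineq x).2
end

section
/- Let A ∈ ℂ^{m×N}, y ∈ ℂ^m, and define h(x) = (1/2)‖Ax − y‖² for x ∈ ℂ^N. Let V ∈ ℂ^{N×k} satisfy V^H V = I_k, let C ⊆ ℂ^N be a closed convex set, let B ∈ ℂ^{N×N} be Hermitian with B ⪰ η̲ I_N for some η̲ > 0, let α > 0 and g ∈ ℂ^N. Suppose x_k ∈ C lies in the range of V, suppose the function Φ(x) = h(x) + Re⟨g, x⟩ + (1/(2α)) (x − x_k)^H B (x − x_k) is η̲-strongly convex on ℂ^N (viewed as a real vector space), and suppose β_k minimizes β ↦ Φ(Vβ) over the set {β ∈ ℂ^k : Vβ ∈ C};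 set x_{k+1} = V β_k. Then Re⟨g, x_{k+1} − x_k⟩ ≤ −(1/2) (x_k − x_{k+1})^H ((2/α) B − η̲ I_N) (x_k − x_{k+1}) + h(x_k) − h(x_{k+1}). -/
open Matrix
open scoped ComplexOrder

set_option maxHeartbeats 1000000

/-- **Key inequality for the subspace-constrained proximal subproblem (Lemma 3).**
`ℂ^N` carries the Hermitian inner product `⟨u,v⟩ = vᴴ u` (so `Re⟨u,v⟩` is
Mathlib's `(⟪u,v⟫_ℂ).re`).  If `V` has orthonormal columns, `C` is closed and
convex, `B` is Hermitian with `B ⪰ η̲ I`, `Φ(x) = h(x) + Re⟨g,x⟩ +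
(1/(2α))(x-x_k)ᴴB(x-x_k)` is `η̲`-strongly convex, `x_k ∈ C` lies in the range
of `V`, and `β_k` minimizes `β ↦ Φ(Vβ)` over `{β : Vβ ∈ C}`, then with
`x_{k+1} = Vβ_k` one has
`Re⟨g, x_{k+1}-x_k⟩ ≤ -(1/2)(x_k-x_{k+1})ᴴ((2/α)B - η̲I)(x_k-x_{k+1})
  + h(x_k) - h(x_{k+1})`. -/
theorem gksm_subproblem_inequality (m N k : ℕ)
    (A : Matrix (Fin m) (Fin N) ℂ) (y : EuclideanSpace ℂ (Fin m))
    (h : EuclideanSpace ℂ (Fin N) → ℝ)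
    (hdef : ∀ x, h x = 1 / 2 * ‖Matrix.toEuclideanLin A x - y‖ ^ 2)
    (V : Matrix (Fin N) (Fin k) ℂ) (hV : Vᴴ * V = 1)
    (C : Set (EuclideanSpace ℂ (Fin N))) (hCc : IsClosed C) (hCconv : Convex ℝ C)
    (B : Matrix (Fin N) (Fin N) ℂ) (hBherm : B.IsHermitian)
    (ηlo : ℝ) (hηlo : 0 < ηlo) (hBlo : (B - (ηlo : ℂ) • 1).PosSemidef)
    (α : ℝ) (hα : 0 < α) (g : EuclideanSpace ℂ (Fin N))
    (xk : EuclideanSpace ℂ (Fin N)) (hxkC : xk ∈ C)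
    (hxkV : ∃ β', xk = Matrix.toEuclideanLin V β')
    (Φ : EuclideanSpace ℂ (Fin N) → ℝ)
    (hΦdef : ∀ x, Φ x = h x + (inner (𝕜 := ℂ) g x).re
      + 1 / (2 * α) * (inner (𝕜 := ℂ) (x - xk) (Matrix.toEuclideanLin B (x - xk))).re)
    (hstrong : ConvexOn ℝ Set.univ (fun x => Φ x - ηlo / 2 * ‖x‖ ^ 2))
    (βk : EuclideanSpace ℂ (Fin k))
    (hfeas : Matrix.toEuclideanLin V βk ∈ C)
    (hmin : ∀ β : EuclideanSpace ℂ (Fin k), Matrix.toEuclideanLin V β ∈ C →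
      Φ (Matrix.toEuclideanLin V βk) ≤ Φ (Matrix.toEuclideanLin V β)) :
    (inner (𝕜 := ℂ) g (Matrix.toEuclideanLin V βk - xk)).re ≤
      -(1 / 2) * (inner (𝕜 := ℂ) (xk - Matrix.toEuclideanLin V βk)
          (Matrix.toEuclideanLin (((2 / α : ℝ) : ℂ) • B - (ηlo : ℂ) • 1)
            (xk - Matrix.toEuclideanLin V βk))).re
        + h xk - h (Matrix.toEuclideanLin V βk) := by
  obtain ⟨β', hβ'⟩ := hxkV
  set x' : EuclideanSpace ℂ (Fin N) := Matrix.toEuclideanLin V βk with hx'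
  set e : EuclideanSpace ℂ (Fin N) := x' - xk with he
  set qd : ℝ := (inner (𝕜 := ℂ) e (Matrix.toEuclideanLin B e)).re with hqd
  have hts : ∀ (r : ℝ) (v : EuclideanSpace ℂ (Fin N)), (r : ℂ) • v = r • v :=
    fun r v => algebraMap_smul ℂ r v
  have hts' : ∀ (r : ℝ) (v : EuclideanSpace ℂ (Fin m)), (r : ℂ) • v = r • v :=
    fun r v => algebraMap_smul ℂ r v
  have hq0 : (inner (𝕜 := ℂ) (xk - xk) (Matrix.toEuclideanLin B (xk - xk))).re = 0 := by
    simp only [sub_self, map_zero, inner_zero_right, Complex.zero_re]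
  -- key inequality for every t ∈ (0,1]
  have key : ∀ t : ℝ, 0 < t → t ≤ 1 →
      Φ x' + (1 - t) * (1 / (2 * α)) * qd ≤ Φ xk := by
    intro t ht0 ht1
    set xt : EuclideanSpace ℂ (Fin N) := x' + (t : ℂ) • (xk - x') with hxt
    have hxt_eq : xt = (1 - t) • x' + t • xk := by
      rw [hxt, hts]; module
    have hxtC : xt ∈ C := by
      rw [hxt_eq]
      exact hCconv hfeas hxkC (by linarith) ht0.le (by ring)
    have hform : xt = Matrix.toEuclideanLin V (βk + (t : ℂ) • (β' - βk)) := by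
      rw [map_add, _root_.map_smul, map_sub, ← hβ', ← hx', hxt]
    have hΦmin : Φ x' ≤ Φ xt := by
      rw [hform] at hxtC ⊢
      exact hmin _ hxtC
    -- linear part
    have hlin : (inner (𝕜 := ℂ) g xt).re
        = (1 - t) * (inner (𝕜 := ℂ) g x').re + t * (inner (𝕜 := ℂ) g xk).re := by
      rw [hxt, inner_add_right, inner_smul_right, inner_sub_right, Complex.add_re,
        Complex.re_ofReal_mul, Complex.sub_re]
      ring
    -- quadratic part
    have hquad : (inner (𝕜 := ℂ) (xt - xk) (Matrix.toEuclideanLin B (xt - xk))).re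
        = (1 - t) ^ 2 * qd := by
      have hd : xt - xk = ((1 - t : ℝ) : ℂ) • e := by
        rw [hxt, he, hts, hts]; module
      rw [hd, _root_.map_smul, inner_smul_left, inner_smul_right, Complex.conj_ofReal,
        Complex.re_ofReal_mul, Complex.re_ofReal_mul, ← hqd]
      ring
    -- h part (convexity along the segment)
    have hh : h xt ≤ (1 - t) * h x' + t * h xk := by
      set LA := Matrix.toEuclideanLin A with hLA
      set u : EuclideanSpace ℂ (Fin m) := LA x' - y with hu
      set w : EuclideanSpace ℂ (Fin m) := LA xk - y with hw
      have hnorm : ∀ (a b : EuclideanSpace ℂ (Fin m)),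
          ‖a + b‖ ^ 2 = ‖a‖ ^ 2 + 2 * (inner (𝕜 := ℂ) a b).re + ‖b‖ ^ 2 := by
        intro a b; rw [@norm_add_sq ℂ]; norm_num
      have hAxt : LA xt - y = u + ((t : ℝ) : ℂ) • (w - u) := by
        rw [hxt, map_add, _root_.map_smul, map_sub, hu, hw, hts', hts']
        module
      have h1 : ‖LA xt - y‖ ^ 2 = ‖u‖ ^ 2 + 2 * t * (inner (𝕜 := ℂ) u (w - u)).re
          + t ^ 2 * ‖w - u‖ ^ 2 := by
        rw [hAxt, hnorm, inner_smul_right, Complex.re_ofReal_mul]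
        have hns : ‖((t : ℝ) : ℂ) • (w - u)‖ = |t| * ‖w - u‖ := by
          rw [norm_smul]; norm_num
        rw [hns, mul_pow, sq_abs]
        ring
      have h2 : ‖w‖ ^ 2 = ‖u‖ ^ 2 + 2 * (inner (𝕜 := ℂ) u (w - u)).re + ‖w - u‖ ^ 2 := by
        have hw' : w = u + (w - u) := by abel
        calc ‖w‖ ^ 2 = ‖u + (w - u)‖ ^ 2 := by rw [← hw']
          _ = _ := hnorm u (w - u)
      have hu' : LA x' - y = u := hu.symm
      have hw'' : LA xk - y = w := hw.symm
      rw [hdef, hdef, hdef, hu', hw'', h1, h2]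
      nlinarith [mul_nonneg (mul_nonneg ht0.le (sub_nonneg.2 ht1)) (sq_nonneg ‖w - u‖)]
    -- combine
    have e1 : Φ x' = h x' + (inner (𝕜 := ℂ) g x').re + 1 / (2 * α) * qd := by
      rw [hΦdef, ← he, ← hqd]
    have e2 : Φ xk = h xk + (inner (𝕜 := ℂ) g xk).re := by
      rw [hΦdef, hq0, mul_zero, add_zero]
    have e3 : Φ xt = h xt + (inner (𝕜 := ℂ) g xt).re + 1 / (2 * α) * ((1 - t) ^ 2 * qd) := by
      rw [hΦdef, hquad]
    have main : t * (Φ x' + (1 - t) * (1 / (2 * α)) * qd) ≤ t * Φ xk := by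
      have hm := hΦmin
      rw [e1, e3] at hm
      rw [e1, e2]
      nlinarith [hh, hlin]
    exact le_of_mul_le_mul_left main ht0
  -- take the limit t → 0⁺ along t = 1/(n+1)
  have lim : Φ x' + 1 / (2 * α) * qd ≤ Φ xk := by
    have htend : Filter.Tendsto
        (fun n : ℕ => Φ x' + (1 - 1 / (n + 1 : ℝ)) * (1 / (2 * α)) * qd)
        Filter.atTop (nhds (Φ x' + (1 - 0) * (1 / (2 * α)) * qd)) := by
      apply Filter.Tendsto.add tendsto_const_nhds
      apply Filter.Tendsto.mul_const
      apply Filter.Tendsto.mul_const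
      exact Filter.Tendsto.const_sub _ tendsto_one_div_add_atTop_nhds_zero_nat
    have hle : ∀ n : ℕ, Φ x' + (1 - 1 / (n + 1 : ℝ)) * (1 / (2 * α)) * qd ≤ Φ xk := by
      intro n
      have hn : (0:ℝ) < 1 / (n + 1 : ℝ) := by positivity
      have hn1 : 1 / (n + 1 : ℝ) ≤ 1 := by
        rw [div_le_one (by positivity)]
        linarith [Nat.cast_nonneg (α := ℝ) n]
      exact key _ hn hn1
    have hfin := le_of_tendsto' htend hle
    calc Φ x' + 1 / (2 * α) * qd
        = Φ x' + (1 - 0) * (1 / (2 * α)) * qd := by ring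
      _ ≤ Φ xk := hfin
  -- expand and conclude
  have e1 : Φ x' = h x' + (inner (𝕜 := ℂ) g x').re + 1 / (2 * α) * qd := by
    rw [hΦdef, ← he, ← hqd]
  have e2 : Φ xk = h xk + (inner (𝕜 := ℂ) g xk).re := by
    rw [hΦdef, hq0, mul_zero, add_zero]
  rw [e1, e2] at lim
  -- compute the RHS quadratic form
  have hrhs : (inner (𝕜 := ℂ) (xk - x')
      (Matrix.toEuclideanLin (((2 / α : ℝ) : ℂ) • B - (ηlo : ℂ) • 1) (xk - x'))).re
      = (2 / α) * qd - ηlo * ‖xk - x'‖ ^ 2 := by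
    have hone : Matrix.toEuclideanLin (1 : Matrix (Fin N) (Fin N) ℂ) (xk - x') = xk - x' := by
      rw [Matrix.toEuclideanLin_apply, Matrix.one_mulVec]
    have h2 : (inner (𝕜 := ℂ) (xk - x') (Matrix.toEuclideanLin B (xk - x'))).re = qd := by
      have hneg : xk - x' = -e := by rw [he]; abel
      rw [hneg, map_neg, inner_neg_neg, ← hqd]
    have h3 : (inner (𝕜 := ℂ) (xk - x') (xk - x')).re = ‖xk - x'‖ ^ 2 := by
      simpa using inner_self_eq_norm_sq (𝕜 := ℂ) (xk - x')
    have expand : Matrix.toEuclideanLin (((2 / α : ℝ) : ℂ) • B - (ηlo : ℂ) • 1) (xk - x')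
        = ((2 / α : ℝ) : ℂ) • (Matrix.toEuclideanLin B (xk - x')) - (ηlo : ℂ) • (xk - x') := by
      have hM : Matrix.toEuclideanLin (((2 / α : ℝ) : ℂ) • B - (ηlo : ℂ) • 1)
          = ((2 / α : ℝ) : ℂ) • Matrix.toEuclideanLin B
            - (ηlo : ℂ) • Matrix.toEuclideanLin (1 : Matrix (Fin N) (Fin N) ℂ) := by
        rw [map_sub, _root_.map_smul, _root_.map_smul]
      rw [hM, LinearMap.sub_apply, LinearMap.smul_apply, LinearMap.smul_apply, hone]
    rw [expand, inner_sub_right, inner_smul_right, inner_smul_right, Complex.sub_re,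
      Complex.re_ofReal_mul, Complex.re_ofReal_mul, h2, h3]
  rw [hrhs]
  have hg : (inner (𝕜 := ℂ) g (x' - xk)).re
      = (inner (𝕜 := ℂ) g x').re - (inner (𝕜 := ℂ) g xk).re := by
    rw [inner_sub_right, Complex.sub_re]
  rw [hg]
  have hK : 0 ≤ ηlo / 2 * ‖xk - x'‖ ^ 2 := by positivity
  have hane : α ≠ 0 := hα.ne'
  have hexp : -(1 / 2) * (2 / α * qd - ηlo * ‖xk - x'‖ ^ 2) + h xk - h x'
      = h xk - h x' - 1 / (2 * α) * qd - 1 / (2 * α) * qd + ηlo / 2 * ‖xk - x'‖ ^ 2 := by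
    field_simp
    ring
  linarith [lim, hK, hexp]
end

section
/- Let t ∈ (0, 1/2], γ > 0, and let (φ_k)_{k≥1} be a sequence of positive real numbers such that for every k ≥ 1, φ_{k+1} ≤ φ_k and φ_{k+1}^{2t} ≤ γ (φ_k − φ_{k+1}). Then for every k ≥ 1, φ_{k+1} ≤ (1 − φ₁^{2t−1}/(γ + φ₁^{2t−1}))^k · φ₁. In particular, for t = 1/2 this yields φ_{k+1} ≤ (γ/(1+γ))^k φ₁. -/
/-- **Linear convergence rate of the auxiliary sequence for `t ∈ (0, 1/2]`
(Lemma 4, first case).**  Real powers are `Real.rpow`.  If `φ_{k+1} ≤ φ_k`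
and `φ_{k+1}^{2t} ≤ γ(φ_k - φ_{k+1})` for all `k ≥ 1`, then
`φ_{k+1} ≤ (1 - φ₁^{2t-1}/(γ + φ₁^{2t-1}))^k φ₁`; for `t = 1/2` this is
`φ_{k+1} ≤ (γ/(1+γ))^k φ₁`. -/
theorem seq_rate_t_le_half (t γ : ℝ) (ht : t ∈ Set.Ioc (0 : ℝ) (1 / 2)) (hγ : 0 < γ)
    (φ : ℕ → ℝ)
    (hpos : ∀ k, 1 ≤ k → 0 < φ k)
    (hmono : ∀ k, 1 ≤ k → φ (k + 1) ≤ φ k)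
    (hineq : ∀ k, 1 ≤ k → φ (k + 1) ^ (2 * t) ≤ γ * (φ k - φ (k + 1))) :
    ∀ k, 1 ≤ k →
      φ (k + 1) ≤ (1 - φ 1 ^ (2 * t - 1) / (γ + φ 1 ^ (2 * t - 1))) ^ k * φ 1 := by
  obtain ⟨ht0, ht2⟩ := ht
  set c : ℝ := φ 1 ^ (2 * t - 1) with hc
  have hφ1 : 0 < φ 1 := hpos 1 le_rfl
  have hcpos : 0 < c := Real.rpow_pos_of_pos hφ1 _
  have hγc : 0 < γ + c := by linarith
  have hexp : 2 * t - 1 ≤ 0 := by linarith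
  -- φ k ≤ φ 1 for all k ≥ 1
  have hle1 : ∀ k, 1 ≤ k → φ k ≤ φ 1 := by
    intro k hk
    induction k with
    | zero => omega
    | succ n ih =>
      rcases Nat.lt_or_ge n 1 with h | hn
      · have : n = 0 := by omega
        subst this; exact le_rfl
      · exact le_trans (hmono n hn) (ih hn)
  -- rewrite target factor
  have hfac : 1 - c / (γ + c) = γ / (γ + c) := by field_simp; ring
  -- one-step estimate
  have hstep : ∀ k, 1 ≤ k → φ (k + 1) ≤ γ / (γ + c) * φ k := by
    intro k hk
    have hp1 : 0 < φ (k + 1) := hpos (k + 1) (by omega)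
    have hcle : c ≤ φ (k + 1) ^ (2 * t - 1) :=
      Real.rpow_le_rpow_of_nonpos hp1 (hle1 (k + 1) (by omega)) hexp
    have hsplit : φ (k + 1) ^ (2 * t) = φ (k + 1) ^ (2 * t - 1) * φ (k + 1) := by
      rw [← Real.rpow_add_one (ne_of_gt hp1)]
      ring_nf
    have h1 : c * φ (k + 1) ≤ γ * (φ k - φ (k + 1)) := by
      calc c * φ (k + 1) ≤ φ (k + 1) ^ (2 * t - 1) * φ (k + 1) :=
            mul_le_mul_of_nonneg_right hcle hp1.le
        _ = φ (k + 1) ^ (2 * t) := hsplit.symm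
        _ ≤ γ * (φ k - φ (k + 1)) := hineq k hk
    rw [div_mul_eq_mul_div, le_div_iff₀ hγc]
    nlinarith
  have hr0 : 0 ≤ γ / (γ + c) := le_of_lt (div_pos hγ hγc)
  intro k hk
  induction k with
  | zero => omega
  | succ n ih =>
    rcases Nat.eq_or_lt_of_le hk with h | h
    · -- n + 1 = 1, i.e. n = 0
      have hn : n = 0 := by omega
      subst hn
      simpa [hfac] using hstep 1 le_rfl
    · have hn : 1 ≤ n := by omega
      calc φ (n + 1 + 1) ≤ γ / (γ + c) * φ (n + 1) := hstep (n + 1) (by omega)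
        _ ≤ γ / (γ + c) * ((1 - c / (γ + c)) ^ n * φ 1) :=
            mul_le_mul_of_nonneg_left (ih hn) hr0
        _ = (1 - c / (γ + c)) ^ (n + 1) * φ 1 := by rw [hfac]; ring
end

section
/- Let t ∈ (1/2, 1), γ > 0, and let (φ_k)_{k≥1} be a sequence of positive real numbers such that for every k ≥ 1, φ_{k+1} ≤ φ_k and φ_{k+1}^{2t} ≤ γ (φ_k − φ_{k+1}). Then for every σ ∈ (0,1) and every k ≥ 1, φ_{k+1} ≤ max( (1−σ)^{k/2} φ₁ , ( φ₁^{1−2t} + (2t−1)(1−σ)^{2t} k / (2γ) )^{1/(1−2t)} ). -/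
open Real

/-- Bernoulli-type inequality for negative exponents in `[-1,0)`. -/
lemma bernoulli_neg' {u q : ℝ} (hu : 0 < u) (hu1 : u ≤ 1) (hq0 : 0 ≤ q) (hq1 : q ≤ 1) :
    1 + q * (1 - u) ≤ u ^ (-q) := by
  have hs : -1 ≤ u - 1 := by linarith
  have h1 : u ^ q ≤ 1 + q * (u - 1) := by
    have := rpow_one_add_le_one_add_mul_self hs hq0 hq1
    simpa using this
  have h2 : 0 < 1 + q * (u - 1) := by nlinarith
  have h3 : 0 < u ^ q := rpow_pos_of_pos hu _
  have h4 : (1 + q * (u - 1))⁻¹ ≤ (u ^ q)⁻¹ := by gcongr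
  have hinv : (1 + q * (u - 1)) * (1 + q * (u - 1))⁻¹ = 1 := mul_inv_cancel₀ h2.ne'
  have h5 : 1 + q * (1 - u) ≤ (1 + q * (u - 1))⁻¹ := by nlinarith [sq_nonneg (q * (u - 1))]
  calc 1 + q * (1 - u) ≤ (1 + q * (u - 1))⁻¹ := h5
    _ ≤ (u ^ q)⁻¹ := h4
    _ = u ^ (-q) := (rpow_neg hu.le q).symm

/-- **Convergence rate of the auxiliary sequence for `t ∈ (1/2, 1)`
(Lemma 4, second case).**  Real powers are `Real.rpow` (note `1 - 2t < 0`).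
If `φ_{k+1} ≤ φ_k` and `φ_{k+1}^{2t} ≤ γ(φ_k - φ_{k+1})` for all `k ≥ 1`,
then for every `σ ∈ (0,1)` and `k ≥ 1`,
`φ_{k+1} ≤ max((1-σ)^{k/2} φ₁, (φ₁^{1-2t} + (2t-1)(1-σ)^{2t} k/(2γ))^{1/(1-2t)})`. -/
theorem seq_rate_t_gt_half (t γ : ℝ) (ht : t ∈ Set.Ioo (1 / 2 : ℝ) 1) (hγ : 0 < γ)
    (φ : ℕ → ℝ)
    (hpos : ∀ k, 1 ≤ k → 0 < φ k)
    (hmono : ∀ k, 1 ≤ k → φ (k + 1) ≤ φ k)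
    (hineq : ∀ k, 1 ≤ k → φ (k + 1) ^ (2 * t) ≤ γ * (φ k - φ (k + 1))) :
    ∀ σ ∈ Set.Ioo (0 : ℝ) 1, ∀ k : ℕ, 1 ≤ k →
      φ (k + 1) ≤ max ((1 - σ) ^ ((k : ℝ) / 2) * φ 1)
        ((φ 1 ^ (1 - 2 * t)
          + (2 * t - 1) * (1 - σ) ^ (2 * t) * (k : ℝ) / (2 * γ)) ^ (1 / (1 - 2 * t))) := by
  obtain ⟨ht1, ht2⟩ := ht
  rintro σ ⟨hσ0, hσ1⟩ k hk
  have hσ' : 0 < 1 - σ := by linarith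
  have hσ'' : 1 - σ ≤ 1 := by linarith
  have hexp : 1 - 2 * t < 0 := by linarith
  set c : ℝ := (2 * t - 1) * (1 - σ) ^ (2 * t) / γ with hc
  clear_value c
  have hcpos : 0 < c := by
    rw [hc]
    apply div_pos _ hγ
    exact mul_pos (by linarith) (rpow_pos_of_pos hσ' _)
  -- key per-step lemma
  have key : ∀ j, 1 ≤ j → (1 - σ) * φ j ≤ φ (j + 1) →
      φ j ^ (1 - 2 * t) + c ≤ φ (j + 1) ^ (1 - 2 * t) := by
    intro j hj hratio
    set x := φ j with hx
    set y := φ (j + 1) with hy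
    have hxpos : 0 < x := hpos j hj
    have hypos : 0 < y := hpos (j + 1) (by omega)
    have hyx : y ≤ x := hmono j hj
    set u : ℝ := y / x with hu
    have hupos : 0 < u := div_pos hypos hxpos
    have hu1 : u ≤ 1 := (div_le_one hxpos).mpr hyx
    have hq0 : (0:ℝ) ≤ 2 * t - 1 := by linarith
    have hq1 : 2 * t - 1 ≤ 1 := by linarith
    have hber : 1 + (2 * t - 1) * (1 - u) ≤ u ^ (1 - 2 * t) := by
      have := bernoulli_neg' hupos hu1 hq0 hq1
      have hne : -(2 * t - 1) = 1 - 2 * t := by ring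
      rwa [hne] at this
    have hyux : y = u * x := by rw [hu, div_mul_cancel₀ y hxpos.ne']
    have hsplit : y ^ (1 - 2 * t) = u ^ (1 - 2 * t) * x ^ (1 - 2 * t) := by
      rw [hyux, mul_rpow hupos.le hxpos.le]
    have hxp : 0 < x ^ (1 - 2 * t) := rpow_pos_of_pos hxpos _
    -- x^{1-2t} * (1-u) = x^{-2t} * (x - y)
    have hid : x ^ (1 - 2 * t) * (1 - u) = x ^ (-(2 * t)) * (x - y) := by
      have h1 : x ^ (1 - 2 * t) = x * x ^ (-(2 * t)) := by
        rw [← rpow_one_add' hxpos.le (by intro h; nlinarith)]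
        ring_nf
      rw [h1, hu]
      field_simp
    -- x^{-2t} * (x - y) ≥ (1-σ)^{2t} / γ
    have hstep : (1 - σ) ^ (2 * t) / γ ≤ x ^ (-(2 * t)) * (x - y) := by
      have hineq' := hineq j hj
      have hxm : 0 < x ^ (-(2 * t)) := rpow_pos_of_pos hxpos _
      have h2 : y ^ (2 * t) / γ ≤ x - y := (div_le_iff₀' hγ).mpr hineq'
      have h3 : y ^ (2 * t) * x ^ (-(2 * t)) = u ^ (2 * t) := by
        rw [hu, div_rpow hypos.le hxpos.le, rpow_neg hxpos.le, div_eq_mul_inv]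
      have h4 : (1 - σ) ^ (2 * t) ≤ u ^ (2 * t) := by
        apply rpow_le_rpow hσ'.le _ (by linarith)
        rw [hu, le_div_iff₀ hxpos]
        linarith [hratio]
      calc (1 - σ) ^ (2 * t) / γ ≤ u ^ (2 * t) / γ := by gcongr
        _ = (y ^ (2 * t) / γ) * x ^ (-(2 * t)) := by rw [← h3]; ring
        _ ≤ (x - y) * x ^ (-(2 * t)) := by gcongr
        _ = x ^ (-(2 * t)) * (x - y) := by ring
    calc x ^ (1 - 2 * t) + c
        = x ^ (1 - 2 * t) * 1 + (2 * t - 1) * ((1 - σ) ^ (2 * t) / γ) := by rw [hc]; ring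
      _ ≤ x ^ (1 - 2 * t) * 1 + (2 * t - 1) * (x ^ (-(2 * t)) * (x - y)) := by
          gcongr
      _ = x ^ (1 - 2 * t) * (1 + (2 * t - 1) * (1 - u)) := by rw [← hid]; ring
      _ ≤ x ^ (1 - 2 * t) * u ^ (1 - 2 * t) := by gcongr
      _ = y ^ (1 - 2 * t) := by rw [hsplit]; ring
  -- monotone step for the rpow quantity
  have mono' : ∀ j, 1 ≤ j → φ j ^ (1 - 2 * t) ≤ φ (j + 1) ^ (1 - 2 * t) := by
    intro j hj
    exact rpow_le_rpow_of_nonpos (hpos (j + 1) (by omega)) (hmono j hj) hexp.le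
  -- main induction
  have main : ∀ k : ℕ, ∃ n m : ℕ, n + m = k ∧
      φ (k + 1) ≤ (1 - σ) ^ n * φ 1 ∧
      φ 1 ^ (1 - 2 * t) + m * c ≤ φ (k + 1) ^ (1 - 2 * t) := by
    intro k
    induction k with
    | zero => exact ⟨0, 0, rfl, by simp, by simp⟩
    | succ k ih =>
      obtain ⟨n, m, hnm, h1, h2⟩ := ih
      by_cases hcase : φ (k + 1 + 1) ≤ (1 - σ) * φ (k + 1)
      · refine ⟨n + 1, m, by omega, ?_, ?_⟩
        · calc φ (k + 1 + 1) ≤ (1 - σ) * φ (k + 1) := hcase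
            _ ≤ (1 - σ) * ((1 - σ) ^ n * φ 1) := mul_le_mul_of_nonneg_left h1 hσ'.le
            _ = (1 - σ) ^ (n + 1) * φ 1 := by ring
        · exact h2.trans (mono' (k + 1) (by omega))
      · push_neg at hcase
        refine ⟨n, m + 1, by omega, ?_, ?_⟩
        · exact (hmono (k + 1) (by omega)).trans h1
        · have := key (k + 1) (by omega) hcase.le
          push_cast
          calc φ 1 ^ (1 - 2 * t) + (m + 1) * c
              = (φ 1 ^ (1 - 2 * t) + m * c) + c := by ring
            _ ≤ φ (k + 1) ^ (1 - 2 * t) + c := by gcongr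
            _ ≤ φ (k + 1 + 1) ^ (1 - 2 * t) := this
  obtain ⟨n, m, hnm, h1, h2⟩ := main k
  rcases le_or_gt (k : ℝ) (2 * n) with hcase | hcase
  · -- left branch
    apply le_max_of_le_left
    calc φ (k + 1) ≤ (1 - σ) ^ n * φ 1 := h1
      _ ≤ (1 - σ) ^ ((k : ℝ) / 2) * φ 1 := by
          gcongr
          · exact hpos 1 le_rfl |>.le
          · rw [← rpow_natCast (1 - σ) n]
            exact rpow_le_rpow_of_exponent_ge hσ' hσ'' (by linarith)
  · -- right branch
    apply le_max_of_le_right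
    have hmk : (k : ℝ) ≤ 2 * m := by
      have : (k : ℝ) = n + m := by exact_mod_cast hnm.symm
      -- 2n < k (reals) with integers: k ≤ 2m? From k = n+m, 2n < k gives n < m + ... 
      have h2n : 2 * (n:ℝ) < (n:ℝ) + m := by linarith
      linarith
    set A : ℝ := φ 1 ^ (1 - 2 * t) + (2 * t - 1) * (1 - σ) ^ (2 * t) * (k : ℝ) / (2 * γ) with hA
    clear_value A
    have hApos : 0 < A := by
      have := rpow_pos_of_pos (hpos 1 le_rfl) (1 - 2 * t)
      have h0 : 0 ≤ (2 * t - 1) * (1 - σ) ^ (2 * t) * (k : ℝ) / (2 * γ) := by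
        apply div_nonneg _ (by linarith)
        exact mul_nonneg (mul_nonneg (by linarith) (rpow_pos_of_pos hσ' (2 * t)).le)
          (Nat.cast_nonneg k)
      linarith
    have hAle : A ≤ φ (k + 1) ^ (1 - 2 * t) := by
      have hkc : (2 * t - 1) * (1 - σ) ^ (2 * t) * (k : ℝ) / (2 * γ) ≤ m * c := by
        have hh : (2 * t - 1) * (1 - σ) ^ (2 * t) * (k:ℝ) / (2 * γ) = ((k:ℝ)/2) * c := by
          rw [hc]; field_simp
        rw [hh]
        exact mul_le_mul_of_nonneg_right (by linarith) hcpos.le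
      calc A ≤ φ 1 ^ (1 - 2 * t) + m * c := by rw [hA]; linarith
        _ ≤ _ := h2
    have hφpos := hpos (k + 1) (by omega)
    have := rpow_le_rpow_of_nonpos hApos hAle (by
      apply div_nonpos_of_nonneg_of_nonpos <;> linarith : 1 / (1 - 2 * t) ≤ 0)
    have hone : (1 - 2 * t) * (1 / (1 - 2 * t)) = 1 :=
      mul_one_div_cancel (by linarith : (1 - 2 * t) ≠ 0)
    rwa [← rpow_mul hφpos.le, hone, rpow_one] at this
end

section
/- Let t ∈ (1/2, 1), γ > 0, and let (φ_k)_{k≥1} be a sequence of positive real numbers such that for every k ≥ 1, φ_{k+1} ≤ φ_k and φ_{k+1}^{2t} ≤ γ (φ_k − φ_{k+1}). Then for every σ ∈ (0,1) there exists K₀ ≥ 1 such that for all k ≥ K₀, φ_{k+1} ≤ ( φ₁^{1−2t} + (2t−1)(1−σ)^{2t} k / (2γ) )^{1/(1−2t)}; that is, the cost-gap sequence eventually decays at the sublinear rate O(k^{1/(1−2t)}). -/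
open Filter Topology

/-- Bernoulli-type inequality for negative exponents in `(-1,0)`:
for `0 < u` and `0 ≤ q ≤ 1`, `1 + q * (1 - u) ≤ u ^ (-q)`. -/
lemma aux_rpow_neg_bernoulli {u q : ℝ} (hu : 0 < u) (hq0 : 0 ≤ q) (hq1 : q ≤ 1) :
    1 + q * (1 - u) ≤ u ^ (-q) := by
  have h1 : u ^ q ≤ 1 + q * (u - 1) := by
    have := rpow_one_add_le_one_add_mul_self (s := u - 1) (by linarith) hq0 hq1
    simpa using this
  have huq : 0 < u ^ q := Real.rpow_pos_of_pos hu q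
  rw [Real.rpow_neg hu.le, inv_eq_one_div, le_div_iff₀ huq]
  nlinarith [sq_nonneg (q * (1 - u))]

/-- **Eventual sublinear decay of the auxiliary sequence for `t ∈ (1/2, 1)`.**
Real powers are `Real.rpow` (note `1 - 2t < 0`).  If `φ_{k+1} ≤ φ_k` and
`φ_{k+1}^{2t} ≤ γ(φ_k - φ_{k+1})` for all `k ≥ 1`, then for every
`σ ∈ (0,1)` there is `K₀ ≥ 1` such that for all `k ≥ K₀`,
`φ_{k+1} ≤ (φ₁^{1-2t} + (2t-1)(1-σ)^{2t} k/(2γ))^{1/(1-2t)}`,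
i.e. the sequence eventually decays at the rate `O(k^{1/(1-2t)})`. -/
theorem seq_eventual_sublinear_rate (t γ : ℝ) (ht : t ∈ Set.Ioo (1 / 2 : ℝ) 1) (hγ : 0 < γ)
    (φ : ℕ → ℝ)
    (hpos : ∀ k, 1 ≤ k → 0 < φ k)
    (hmono : ∀ k, 1 ≤ k → φ (k + 1) ≤ φ k)
    (hineq : ∀ k, 1 ≤ k → φ (k + 1) ^ (2 * t) ≤ γ * (φ k - φ (k + 1))) :
    ∀ σ ∈ Set.Ioo (0 : ℝ) 1, ∃ K₀ : ℕ, 1 ≤ K₀ ∧ ∀ k : ℕ, K₀ ≤ k →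
      φ (k + 1) ≤ (φ 1 ^ (1 - 2 * t)
        + (2 * t - 1) * (1 - σ) ^ (2 * t) * (k : ℝ) / (2 * γ)) ^ (1 / (1 - 2 * t)) := by
  obtain ⟨ht1, ht2⟩ := ht
  intro σ hσ
  obtain ⟨hσ0, hσ1⟩ := hσ
  obtain ⟨q, hqdef⟩ : ∃ q : ℝ, q = 2 * t - 1 := ⟨_, rfl⟩
  have hq0 : 0 < q := by rw [hqdef]; linarith
  have hq1 : q < 1 := by rw [hqdef]; linarith
  have hne : (1 : ℝ) - 2 * t = -q := by rw [hqdef]; ring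
  have hsσ : 0 < 1 - σ := by linarith
  obtain ⟨g, hgdef⟩ : ∃ g : ℕ → ℝ, g = fun k => φ (k + 1) := ⟨_, rfl⟩
  have hgpos : ∀ k, 0 < g k := by rw [hgdef]; exact fun k => hpos (k + 1) (Nat.le_add_left 1 k)
  have hganti : ∀ k, g (k + 1) ≤ g k := by rw [hgdef]; exact fun k => hmono (k + 1) (Nat.le_add_left 1 k)
  have hganti' : Antitone g := antitone_nat_of_succ_le hganti
  have hgineq : ∀ k, g (k + 1) ^ (2 * t) ≤ γ * (g k - g (k + 1)) := by
    rw [hgdef]; exact fun k => hineq (k + 1) (Nat.le_add_left 1 k)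
  have h2t : (0 : ℝ) < 2 * t := by linarith
  -- the key per-step estimate, from Bernoulli's inequality
  have key : ∀ k : ℕ, g k ^ (-q) + q / γ * (g (k + 1) / g k) ^ (2 * t) ≤ g (k + 1) ^ (-q) := by
    intro k
    have hGk := hgpos k
    have hGk1 := hgpos (k + 1)
    obtain ⟨u, hu⟩ : ∃ u : ℝ, u = g (k + 1) / g k := ⟨_, rfl⟩
    rw [← hu]
    have hu0 : 0 < u := hu ▸ div_pos hGk1 hGk
    have hbern : 1 + q * (1 - u) ≤ u ^ (-q) := aux_rpow_neg_bernoulli hu0 hq0.le hq1.le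
    have hrw : g (k + 1) ^ (-q) = u ^ (-q) * g k ^ (-q) := by
      rw [hu, ← Real.mul_rpow (div_pos hGk1 hGk).le hGk.le, div_mul_cancel₀ _ hGk.ne']
    have hψpos : 0 < g k ^ (-q) := Real.rpow_pos_of_pos hGk _
    have hstep1 : (1 + q * (1 - u)) * g k ^ (-q) ≤ g (k + 1) ^ (-q) := by
      rw [hrw]
      exact mul_le_mul_of_nonneg_right hbern hψpos.le
    -- now bound `q * (1 - u) * g k ^ (-q)` from below
    have hIq : g (k + 1) ^ (2 * t) / γ ≤ g k - g (k + 1) := by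
      rw [div_le_iff₀ hγ]
      linarith [hgineq k]
    have e1 : u ^ (2 * t) = g (k + 1) ^ (2 * t) / g k ^ (2 * t) := by
      rw [hu, Real.div_rpow hGk1.le hGk.le]
    have e2 : g k ^ (-q) = g k / g k ^ (2 * t) := by
      have : (-q : ℝ) = 1 - 2 * t := by rw [hne]
      rw [this, Real.rpow_sub hGk, Real.rpow_one]
    have hG2 : 0 < g k ^ (2 * t) := Real.rpow_pos_of_pos hGk _
    have h5 : q / γ * u ^ (2 * t) ≤ q * (1 - u) * g k ^ (-q) := by
      rw [e1, e2, hu]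
      have hrw2 : q * (1 - g (k + 1) / g k) * (g k / g k ^ (2 * t))
          = q * (g k - g (k + 1)) / g k ^ (2 * t) := by
        field_simp
      rw [hrw2]
      have hrw3 : q / γ * (g (k + 1) ^ (2 * t) / g k ^ (2 * t))
          = q * (g (k + 1) ^ (2 * t) / γ) / g k ^ (2 * t) := by ring
      rw [hrw3]
      gcongr
    have hexp : (1 + q * (1 - u)) * g k ^ (-q) = g k ^ (-q) + q * (1 - u) * g k ^ (-q) := by
      ring
    linarith [hstep1, h5]
  -- `g → 0`
  have hg0 : Tendsto g atTop (𝓝 0) := by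
    have hbdd : BddBelow (Set.range g) := ⟨0, by rintro x ⟨k, rfl⟩; exact (hgpos k).le⟩
    have hL : Tendsto g atTop (𝓝 (⨅ k, g k)) := tendsto_atTop_ciInf hganti' hbdd
    set L : ℝ := ⨅ k, g k with hLdef
    have hL0 : 0 ≤ L := le_ciInf fun k => (hgpos k).le
    have hLs : Tendsto (fun k => g (k + 1)) atTop (𝓝 L) :=
      hL.comp (tendsto_add_atTop_nat 1)
    have hd : Tendsto (fun k => γ * (g k - g (k + 1))) atTop (𝓝 0) := by
      have := (hL.sub hLs).const_mul γ
      simpa using this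
    have hsq : Tendsto (fun k => g (k + 1) ^ (2 * t)) atTop (𝓝 0) :=
      squeeze_zero (fun k => (Real.rpow_pos_of_pos (hgpos (k + 1)) _).le)
        (fun k => hgineq k) hd
    have hsq' : Tendsto (fun k => g (k + 1) ^ (2 * t)) atTop (𝓝 (L ^ (2 * t))) :=
      hLs.rpow_const (Or.inr h2t.le)
    have hL2 : L ^ (2 * t) = 0 := tendsto_nhds_unique hsq' hsq
    have : L = 0 := by
      by_contra h
      have hLpos : 0 < L := lt_of_le_of_ne hL0 (Ne.symm h)
      exact absurd hL2 (Real.rpow_pos_of_pos hLpos _).ne'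
    rwa [this] at hL
  -- `ψ k = g k ^ (-q) → ∞`
  have hψtop : Tendsto (fun k => g k ^ (-q)) atTop atTop := by
    have h1 : Tendsto (fun k => g k ^ q) atTop (𝓝[>] 0) := by
      refine tendsto_nhdsWithin_iff.mpr ⟨?_, ?_⟩
      · simpa [Real.zero_rpow hq0.ne'] using hg0.rpow_const (Or.inr hq0.le)
      · exact Eventually.of_forall fun k => Real.rpow_pos_of_pos (hgpos k) q
    refine h1.inv_tendsto_nhdsGT_zero.congr fun k => ?_
    simp [Real.rpow_neg (hgpos k).le]
  -- constants
  obtain ⟨C, hCdef⟩ : ∃ C : ℝ, C = q * (1 - σ) ^ (2 * t) / (2 * γ) := ⟨_, rfl⟩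
  have hA : 0 < (1 - σ) ^ (2 * t) := Real.rpow_pos_of_pos hsσ _
  have hC : 0 < C := by
    rw [hCdef]; positivity
  have h2C : 2 * C = q * (1 - σ) ^ (2 * t) / γ := by
    rw [hCdef]; field_simp
  have hfac : 1 < (1 - σ) ^ (-q) := by
    rw [Real.one_lt_rpow_iff_of_pos hsσ]
    right
    exact ⟨by linarith, by linarith⟩
  -- choose K₁ for the eventual step estimate
  obtain ⟨K₁, hK₁⟩ := eventually_atTop.mp
    (hψtop.eventually_ge_atTop (2 * C / ((1 - σ) ^ (-q) - 1)))
  -- per-step increase by `2C` beyond `K₁`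
  have step : ∀ k, K₁ ≤ k → g k ^ (-q) + 2 * C ≤ g (k + 1) ^ (-q) := by
    intro k hk
    by_cases hcase : (1 - σ) * g k ≤ g (k + 1)
    · have hdiv : 1 - σ ≤ g (k + 1) / g k := (le_div_iff₀ (hgpos k)).mpr hcase
      have hrp : (1 - σ) ^ (2 * t) ≤ (g (k + 1) / g k) ^ (2 * t) :=
        Real.rpow_le_rpow hsσ.le hdiv h2t.le
      have h6 : 2 * C ≤ q / γ * (g (k + 1) / g k) ^ (2 * t) := by
        rw [h2C]
        calc q * (1 - σ) ^ (2 * t) / γ = q / γ * (1 - σ) ^ (2 * t) := by ring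
          _ ≤ q / γ * (g (k + 1) / g k) ^ (2 * t) :=
            mul_le_mul_of_nonneg_left hrp (by positivity)
      linarith [key k]
    · push_neg at hcase
      have h7 : ((1 - σ) * g k) ^ (-q) ≤ g (k + 1) ^ (-q) :=
        Real.rpow_le_rpow_of_nonpos (hgpos (k + 1)) hcase.le (by linarith)
      have h8 : ((1 - σ) * g k) ^ (-q) = (1 - σ) ^ (-q) * g k ^ (-q) :=
        Real.mul_rpow hsσ.le (hgpos k).le
      have h9 : 2 * C / ((1 - σ) ^ (-q) - 1) ≤ g k ^ (-q) := hK₁ k hk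
      have h10 : 2 * C ≤ ((1 - σ) ^ (-q) - 1) * g k ^ (-q) := by
        have hpos' : 0 < (1 - σ) ^ (-q) - 1 := by linarith
        calc 2 * C = (2 * C / ((1 - σ) ^ (-q) - 1)) * ((1 - σ) ^ (-q) - 1) := by
              field_simp
          _ ≤ g k ^ (-q) * ((1 - σ) ^ (-q) - 1) :=
              mul_le_mul_of_nonneg_right h9 hpos'.le
          _ = ((1 - σ) ^ (-q) - 1) * g k ^ (-q) := by ring
      nlinarith [h7, h8.symm.le]
  -- accumulate
  have accum : ∀ m : ℕ, g K₁ ^ (-q) + 2 * C * m ≤ g (K₁ + m) ^ (-q) := by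
    intro m
    induction m with
    | zero => simp
    | succ m ih =>
      have := step (K₁ + m) (Nat.le_add_right _ _)
      push_cast
      push_cast at ih
      have : g (K₁ + m) ^ (-q) + 2 * C ≤ g (K₁ + (m + 1)) ^ (-q) := by
        have h := step (K₁ + m) (Nat.le_add_right _ _)
        simpa [Nat.add_assoc] using h
      linarith
  have hψ01 : g 0 ^ (-q) ≤ g K₁ ^ (-q) :=
    Real.rpow_le_rpow_of_nonpos (hgpos K₁) (hganti' (Nat.zero_le K₁)) (by linarith)
  refine ⟨2 * K₁ + 2, by omega, ?_⟩
  intro k hk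
  have hkK : K₁ ≤ k := by omega
  have hsub : K₁ + (k - K₁) = k := by omega
  have hacc := accum (k - K₁)
  rw [hsub] at hacc
  have hcast : ((k - K₁ : ℕ) : ℝ) = (k : ℝ) - K₁ := by
    push_cast [Nat.cast_sub hkK]; ring
  rw [hcast] at hacc
  have hhalf : (k : ℝ) / 2 ≤ (k : ℝ) - K₁ := by
    have : (2 * K₁ + 2 : ℕ) ≤ k := hk
    have h2k : (2 * (K₁ : ℝ) + 2) ≤ k := by exact_mod_cast this
    linarith
  have hmain : g 0 ^ (-q) + C * k ≤ g k ^ (-q) := by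
    nlinarith [hacc, hψ01, hC, hhalf]
  -- convert to the stated form
  have hφ1 : φ 1 = g 0 := by rw [hgdef]
  have hφk : φ (k + 1) = g k := by rw [hgdef]
  rw [hφ1, hφk, hne]
  have hcoef : (2 * t - 1) * (1 - σ) ^ (2 * t) * (k : ℝ) / (2 * γ) = C * k := by
    rw [hCdef, hqdef]; ring
  rw [hcoef]
  have hXpos : 0 < g 0 ^ (-q) + C * k := by
    have := Real.rpow_pos_of_pos (hgpos 0) (-q)
    have hk0 : (0 : ℝ) ≤ (k : ℝ) := Nat.cast_nonneg k
    nlinarith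
  have hz : 1 / (-q) ≤ 0 := by
    apply div_nonpos_of_nonneg_of_nonpos zero_le_one
    linarith
  have := Real.rpow_le_rpow_of_nonpos hXpos hmain hz
  calc g k = (g k ^ (-q)) ^ (1 / (-q)) := by
        rw [← Real.rpow_mul (hgpos k).le, mul_one_div_cancel (by linarith : (-q : ℝ) ≠ 0),
          Real.rpow_one]
    _ ≤ (g 0 ^ (-q) + C * k) ^ (1 / (-q)) := this
end

section
/- Let f : ℂ^N → ℝ be L-smooth (differentiable with ‖∇f(x₁) − ∇f(x₂)‖ ≤ L‖x₁ − x₂‖ for all x₁,x₂, gradients taken with respect to the real inner product Re(v^H u)), let h : ℂ^N → ℝ be any function, and set F = h + f. Let B ∈ ℂ^{N×N} be Hermitian with B ⪰ η̲ I_N for some η̲ > 0, and let 0 < α < 2η̲/(η̲ + L). Suppose x_k, x_{k+1} ∈ ℂ^N satisfy Re⟨∇f(x_k), x_{k+1} − x_k⟩ ≤ −(1/2)(x_k − x_{k+1})^H ((2/α) B − η̲ I_N)(x_k − x_{k+1}) + h(x_k) − h(x_{k+1}). Then, with υ = η̲/α − (η̲ + L)/2 > 0, one has υ ‖x_k − x_{k+1}‖²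 ≤ F(x_k) − F(x_{k+1}); in particular F(x_{k+1}) ≤ F(x_k). -/
open Matrix
open scoped ComplexOrder

/-- **Descent lemma**: an `L`-smooth function admits the quadratic upper bound
`f y ≤ f x + ⟪∇f x, y - x⟫ + L/2 ‖y - x‖²`. -/
lemma descent_lemma {E : Type*} [NormedAddCommGroup E] [InnerProductSpace ℝ E] [CompleteSpace E]
    {f : E → ℝ} (hf : Differentiable ℝ f) {L : ℝ}
    (hlip : ∀ a b : E, ‖gradient f a - gradient f b‖ ≤ L * ‖a - b‖) (x y : E) :
    f y ≤ f x + inner (𝕜 := ℝ) (gradient f x) (y - x) + L / 2 * ‖y - x‖ ^ 2 := by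
  set d := y - x with hd
  have hg : ∀ t : ℝ, HasDerivAt (fun s : ℝ => x + s • d) d t := fun t => by
    simpa using ((hasDerivAt_id t).smul_const d).const_add x
  have hφ : ∀ t : ℝ, HasDerivAt (fun s : ℝ => f (x + s • d))
      (inner (𝕜 := ℝ) (gradient f (x + t • d)) d) t := fun t => by
    have h1 := (hf (x + t • d)).hasGradientAt.hasFDerivAt.comp_hasDerivAt t (hg t)
    simpa [Function.comp_def, InnerProductSpace.toDual_apply_apply] using h1
  set ψ : ℝ → ℝ := fun t => f (x + t • d) - t * inner (𝕜 := ℝ) (gradient f x) d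
      - L / 2 * ‖d‖ ^ 2 * t ^ 2 with hψdef
  have hψ : ∀ t : ℝ, HasDerivAt ψ
      (inner (𝕜 := ℝ) (gradient f (x + t • d)) d - inner (𝕜 := ℝ) (gradient f x) d
        - L * ‖d‖ ^ 2 * t) t := fun t => by
    have h2 : HasDerivAt (fun s : ℝ => s * inner (𝕜 := ℝ) (gradient f x) d)
        (inner (𝕜 := ℝ) (gradient f x) d) t := by
      simpa using (hasDerivAt_id t).mul_const (inner (𝕜 := ℝ) (gradient f x) d)
    have h3 : HasDerivAt (fun s : ℝ => L / 2 * ‖d‖ ^ 2 * s ^ 2) (L * ‖d‖ ^ 2 * t) t := by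
      have := (hasDerivAt_pow 2 t).const_mul (L / 2 * ‖d‖ ^ 2)
      refine this.congr_deriv ?_
      ring
    exact ((hφ t).sub h2).sub h3
  have hψdiff : Differentiable ℝ ψ := fun t => (hψ t).differentiableAt
  have hmono : AntitoneOn ψ (Set.Icc 0 1) := by
    apply antitoneOn_of_deriv_nonpos (convex_Icc 0 1) hψdiff.continuous.continuousOn
      hψdiff.differentiableOn
    intro t ht
    rw [interior_Icc] at ht
    rw [(hψ t).deriv]
    have hb : inner (𝕜 := ℝ) (gradient f (x + t • d)) d - inner (𝕜 := ℝ) (gradient f x) d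
        = inner (𝕜 := ℝ) (gradient f (x + t • d) - gradient f x) d := by
      rw [inner_sub_left]
    rw [hb]
    have h4 : inner (𝕜 := ℝ) (gradient f (x + t • d) - gradient f x) d
        ≤ ‖gradient f (x + t • d) - gradient f x‖ * ‖d‖ := real_inner_le_norm _ _
    have h5 : ‖gradient f (x + t • d) - gradient f x‖ ≤ L * (t * ‖d‖) := by
      have := hlip (x + t • d) x
      simpa [norm_smul, abs_of_pos ht.1] using this
    nlinarith [norm_nonneg d, norm_nonneg (gradient f (x + t • d) - gradient f x), ht.1.le]
  have h01 := hmono (Set.left_mem_Icc.mpr zero_le_one) (Set.right_mem_Icc.mpr zero_le_one)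
    zero_le_one
  simp only [hψdef, zero_smul, add_zero, one_smul, zero_mul, one_pow, mul_one, zero_pow,
    mul_zero, sub_zero] at h01
  have hy : x + d = y := by rw [hd]; abel
  rw [hy] at h01
  linarith

/-- The real inner product on `ℂ^N` is the real part of the Hermitian one. -/
lemma re_inner_eq_real {N : ℕ} (x y : EuclideanSpace ℂ (Fin N)) :
    inner (𝕜 := ℝ) x y = (inner (𝕜 := ℂ) x y).re := by
  rw [PiLp.inner_apply, PiLp.inner_apply, Complex.re_sum]
  rfl

/-- Quadratic lower bound for the matrix `(2/α)B - η̲ I` when `B ⪰ η̲ I`. -/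
lemma quad_lb {N : ℕ} (B : Matrix (Fin N) (Fin N) ℂ) (ηlo α : ℝ) (hα : 0 < α)
    (hBlo : (B - (ηlo : ℂ) • 1).PosSemidef) (v : EuclideanSpace ℂ (Fin N)) :
    (2 * ηlo / α - ηlo) * ‖v‖ ^ 2 ≤
      (inner (𝕜 := ℂ) v
        (Matrix.toEuclideanLin (((2 / α : ℝ) : ℂ) • B - (ηlo : ℂ) • 1) v)).re := by
  have hM : ((2 / α : ℝ) : ℂ) • B - (ηlo : ℂ) • 1
      = ((2 / α : ℝ) : ℂ) • (B - (ηlo : ℂ) • 1) + ((2 * ηlo / α - ηlo : ℝ) : ℂ) • 1 := by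
    rw [smul_sub, smul_smul]
    push_cast
    rw [sub_add, ← sub_smul]
    ring_nf
  have h1 : Matrix.toEuclideanLin (1 : Matrix (Fin N) (Fin N) ℂ) v = v := by
    simp [Matrix.toEuclideanLin_apply]
  have hpsd : 0 ≤ (inner (𝕜 := ℂ) v (Matrix.toEuclideanLin (B - (ηlo : ℂ) • 1) v)).re := by
    have h2 := hBlo.dotProduct_mulVec_nonneg ((WithLp.equiv 2 _) v)
    have h3 : inner (𝕜 := ℂ) v (Matrix.toEuclideanLin (B - (ηlo : ℂ) • 1) v)
        = star ((WithLp.equiv 2 _) v) ⬝ᵥ ((B - (ηlo : ℂ) • 1) *ᵥ (WithLp.equiv 2 _) v) := by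
      rw [EuclideanSpace.inner_eq_star_dotProduct]
      exact dotProduct_comm _ _
    rw [h3]
    rw [Complex.le_def] at h2
    simpa using h2.1
  have hvv : inner (𝕜 := ℂ) v v = ((‖v‖ ^ 2 : ℝ) : ℂ) := by
    rw [inner_self_eq_norm_sq_to_K]
    norm_cast
  rw [hM, map_add, _root_.map_smul, _root_.map_smul, LinearMap.add_apply, LinearMap.smul_apply,
    LinearMap.smul_apply, h1, inner_add_right, inner_smul_right, inner_smul_right,
    hvv, Complex.add_re, Complex.re_ofReal_mul, Complex.re_ofReal_mul, Complex.ofReal_re]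
  have h2α : 0 ≤ 2 / α := by positivity
  nlinarith [hpsd]

/-- **Sufficient decrease (Theorem 1, key step).**  `ℂ^N` carries the
Hermitian inner product `⟨u,v⟩ = vᴴ u`, gradients are taken with respect to
the real inner product `Re(vᴴ u)`.  If `f` is `L`-smooth, `F = h + f`, `B`
is Hermitian with `B ⪰ η̲ I`, `0 < α < 2η̲/(η̲+L)`, and the iterates satisfy
`Re⟨∇f(x_k), x_{k+1}-x_k⟩ ≤ -(1/2)(x_k-x_{k+1})ᴴ((2/α)B-η̲I)(x_k-x_{k+1})
 + h(x_k) - h(x_{k+1})`, then with `υ = η̲/α - (η̲+L)/2 > 0` one has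
`υ‖x_k - x_{k+1}‖² ≤ F(x_k) - F(x_{k+1})`, in particular `F(x_{k+1}) ≤ F(x_k)`. -/
theorem sufficient_decrease_step (N : ℕ) (L : ℝ)
    (f : EuclideanSpace ℂ (Fin N) → ℝ)
    (hfdiff : Differentiable ℝ f)
    (hflip : ∀ x₁ x₂ : EuclideanSpace ℂ (Fin N),
      ‖gradient f x₁ - gradient f x₂‖ ≤ L * ‖x₁ - x₂‖)
    (h : EuclideanSpace ℂ (Fin N) → ℝ)
    (F : EuclideanSpace ℂ (Fin N) → ℝ) (hFdef : ∀ x, F x = h x + f x)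
    (B : Matrix (Fin N) (Fin N) ℂ) (hBherm : B.IsHermitian)
    (ηlo : ℝ) (hηlo : 0 < ηlo) (hBlo : (B - (ηlo : ℂ) • 1).PosSemidef)
    (α : ℝ) (hα0 : 0 < α) (hαub : α < 2 * ηlo / (ηlo + L))
    (xk xk1 : EuclideanSpace ℂ (Fin N))
    (hineq : (inner (𝕜 := ℂ) (gradient f xk) (xk1 - xk)).re ≤
      -(1 / 2) * (inner (𝕜 := ℂ) (xk - xk1)
          (Matrix.toEuclideanLin (((2 / α : ℝ) : ℂ) • B - (ηlo : ℂ) • 1) (xk - xk1))).re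
        + h xk - h xk1) :
    0 < ηlo / α - (ηlo + L) / 2 ∧
    (ηlo / α - (ηlo + L) / 2) * ‖xk - xk1‖ ^ 2 ≤ F xk - F xk1 ∧
    F xk1 ≤ F xk := by
  have hηL : 0 < ηlo + L := by
    by_contra h'
    push_neg at h'
    have : 2 * ηlo / (ηlo + L) ≤ 0 :=
      div_nonpos_iff.mpr (Or.inl ⟨by linarith, h'⟩)
    linarith
  have hυ : 0 < ηlo / α - (ηlo + L) / 2 := by
    have h1 : α * (ηlo + L) < 2 * ηlo := (lt_div_iff₀ hηL).mp hαub
    have h2 : (ηlo + L) / 2 < ηlo / α := by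
      rw [div_lt_div_iff₀ (by norm_num) hα0]
      linarith
    linarith
  refine ⟨hυ, ?_, ?_⟩
  · have hdesc := descent_lemma hfdiff hflip xk xk1
    rw [re_inner_eq_real] at hdesc
    have hquad := quad_lb B ηlo α hα0 hBlo (xk - xk1)
    have hnorm : ‖xk1 - xk‖ = ‖xk - xk1‖ := norm_sub_rev _ _
    rw [hnorm] at hdesc
    have hring : 2 * ηlo / α = 2 * (ηlo / α) := by ring
    rw [hring] at hquad
    rw [hFdef, hFdef]
    nlinarith [hineq, hdesc, hquad]
  · have hdesc := descent_lemma hfdiff hflip xk xk1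
    rw [re_inner_eq_real] at hdesc
    have hquad := quad_lb B ηlo α hα0 hBlo (xk - xk1)
    have hnorm : ‖xk1 - xk‖ = ‖xk - xk1‖ := norm_sub_rev _ _
    rw [hnorm] at hdesc
    have hring : 2 * ηlo / α = 2 * (ηlo / α) := by ring
    rw [hring] at hquad
    rw [hFdef, hFdef]
    nlinarith [hineq, hdesc, hquad, sq_nonneg ‖xk - xk1‖, hυ]
end
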